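/- Consider the random walk in the random environment 𝐏^expl on ℤ^d, d ≥ 2, with parameter ε ∈ (1/(2d+1), 1/5). Then: 𝐏^expl-a.s., P^ω_0[X_1·ℓ_0 = 1] = 1 − ε, where ℓ_0 = e_1 + ⋯ + e_d; consequently, ℙ-almost surely X_n·ℓ_0/n → 1−2ε, the walk is transient in the direction ℓ_0/|ℓ_0|, and condition (T) in the direction ℓ_0/|ℓ_0| holds. -/

import Mathlib

open MeasureTheory ProbabilityTheory Filter Topology ENNReal
open scoped Classical

noncomputable section

namespace RWRE

/-- Sites of `ℤ^d`. -/
abbrev V (d : ℕ) := Fin d → ℤ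

/-- The `2d` directions: `(i, true)` is `e_i`, `(i, false)` is `-e_i`. -/
abbrev Dir (d : ℕ) := Fin d × Bool

/-- Trajectory space. -/
abbrev Traj (d : ℕ) := ℕ → V d

/-- The unit vector associated to a direction. -/
def dirVec (d : ℕ) (e : Dir d) : V d := fun i => if i = e.1 then (if e.2 then 1 else -1) else 0

/-- Probability vectors on the set of directions. -/
abbrev ProbVec (d : ℕ) := {p : Dir d → ℝ // (∀ e, 0 ≤ p e) ∧ ∑ e, p e = 1}

/-- Environments. -/
abbrev Env (d : ℕ) := V d → ProbVec d

/-- Transition probability at site `x` in direction `e`. -/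
def pmf {d : ℕ} (ω : Env d) (x : V d) (e : Dir d) : ℝ := (ω x).1 e

/-- Transition probability from `x` to `y` (zero if `y` is not a neighbour of `x`). -/
def stepProb {d : ℕ} (ω : Env d) (x y : V d) : ℝ :=
  ∑ e : Dir d, if y = x + dirVec d e then pmf ω x e else 0

/-- `P` is the family of quenched laws: `P ω x` is the law of the Markov chain started at `x`
with transition probabilities given by `ω`. -/
def IsQuenched {d : ℕ} (P : Env d → V d → Measure (Traj d)) : Prop :=
  (∀ ω x, IsProbabilityMeasure (P ω x)) ∧
  (∀ x, Measurable fun ω => P ω x) ∧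
  ∀ ω x (n : ℕ) (γ : ℕ → V d),
    (P ω x {X | ∀ k ≤ n, X k = γ k}).toReal
      = (if γ 0 = x then 1 else 0) * ∏ k ∈ Finset.range n, stepProb ω (γ k) (γ (k + 1))

/-- The annealed law `ℙ_x`. -/
def annealed {d : ℕ} (P : Env d → V d → Measure (Traj d)) (Pr : Measure (Env d)) (x : V d) :
    Measure (Traj d) := Pr.bind fun ω => P ω x

/-- The environment law is i.i.d. -/
def IsIID {d : ℕ} (Pr : Measure (Env d)) : Prop :=
  IsProbabilityMeasure Pr ∧
  iIndepFun (fun (x : V d) (ω : Env d) => ω x) Pr ∧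
  ∀ x : V d, Pr.map (fun ω => ω x) = Pr.map (fun ω => ω 0)

/-- Ellipticity. -/
def Elliptic {d : ℕ} (Pr : Measure (Env d)) : Prop :=
  ∀ᵐ ω ∂Pr, ∀ x e, 0 < pmf ω x e

/-- Exit time of a set. -/
def exitTime {d : ℕ} (A : Set (V d)) (X : Traj d) : ℕ∞ :=
  ⨅ (n : ℕ) (_ : X n ∉ A), (n : ℕ∞)

/-- Hitting time of a set. -/
def hitTime {d : ℕ} (A : Set (V d)) (X : Traj d) : ℕ∞ :=
  ⨅ (n : ℕ) (_ : X n ∈ A), (n : ℕ∞)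

/-- Positive hitting time of a set. -/
def retTime {d : ℕ} (A : Set (V d)) (X : Traj d) : ℕ∞ :=
  ⨅ (n : ℕ) (_ : 1 ≤ n ∧ X n ∈ A), (n : ℕ∞)

/-- Scalar product of `ℓ ∈ ℝ^d` with a site of `ℤ^d`. -/
def dot {d : ℕ} (ℓ : Fin d → ℝ) (x : V d) : ℝ := ∑ i, ℓ i * (x i : ℝ)

/-- `ℓ` belongs to the unit sphere `S^{d-1}`. -/
def UnitVec {d : ℕ} (ℓ : Fin d → ℝ) : Prop := ∑ i, ℓ i ^ 2 = 1

/-- The walk, under the annealed law, is transient in the direction `ℓ`. -/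
def Transient {d : ℕ} (P : Env d → V d → Measure (Traj d)) (Pr : Measure (Env d))
    (ℓ : Fin d → ℝ) : Prop :=
  annealed P Pr 0 {X | Tendsto (fun n => dot ℓ (X n)) atTop atTop} = 1

/-- The trajectory rescaled to `ℝ^d`. -/
def toR {d : ℕ} (x : V d) : Fin d → ℝ := fun i => (x i : ℝ)

/-- The unit hypercube based at `x`. -/
def cube {d : ℕ} (x : V d) : Set (V d) := {y | ∀ i, y i = x i ∨ y i = x i + 1}

/-- The corners of the unit hypercube based at `0`, as a finite set. -/
def cubePts (d : ℕ) : Finset (V d) :=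
  Finset.univ.image fun s : Fin d → Bool => (fun i => if s i then 1 else 0 : V d)

/-- The (outer) boundary of a set of sites. -/
def bdry {d : ℕ} (A : Set (V d)) : Set (V d) :=
  {z | z ∉ A ∧ ∃ w ∈ A, ∑ i, |z i - w i| = 1}

/-- The boundary points adjacent to `y`. -/
def bdryAt {d : ℕ} (y : V d) (A : Set (V d)) : Set (V d) :=
  {z | z ∈ bdry A ∧ ∑ i, |z i - y i| = 1}

/-- `Q^C_y`: the largest transition probability leading out of `C` from `y`. -/
def Qmax {d : ℕ} (ω : Env d) (C : Set (V d)) (y : V d) : ℝ :=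
  ⨆ e : Dir d, if y + dirVec d e ∈ bdryAt y C then pmf ω y e else 0

/-- The event that the walk exits `C` through a neighbour of `y` before returning to `x`. -/
def exitVia {d : ℕ} (C : Set (V d)) (x y : V d) : Set (Traj d) :=
  {X | ∃ n : ℕ, X n ∈ bdryAt y C ∧ (∀ m < n, X m ∉ bdry C) ∧ ∀ m, 1 ≤ m → m < n → X m ≠ x}

/-- `Q̃^C_{x,y}`: the quenched probability, starting from `x`, of exiting `C` through a
neighbour of `y` before returning to `x`. -/
def Qtilde {d : ℕ} (P : Env d → V d → Measure (Traj d)) (ω : Env d) (C : Set (V d))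
    (x y : V d) : ℝ := ((P ω x) (exitVia C x y)).toReal

/-- A marked Markovian hypercube: a unit hypercube containing `0` discovered in a Markovian
fashion by revealing sites `f 0 = 0, f 1, ...` one at a time, together with marks. -/
structure MMH (d : ℕ) where
  /-- The successively revealed sites. -/
  f : ℕ → Env d → V d
  /-- The marks, indexed by the corners of the unit hypercube at `0`. -/
  mark : V d → Env d → ℝ
  /-- The base point `x₀(ω)` of the revealed hypercube. -/
  x0 : Env d → V d
  f_zero : ∀ ω, f 0 ω = 0
  f_meas : ∀ i, Measurable (f i)
  f_local : ∀ i (ω ω' : Env d), (∀ j ≤ i, ω' (f j ω) = ω (f j ω)) → f (i + 1) ω' = f (i + 1) ω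
  f_adj : ∀ i ω, i + 1 < 2 ^ d → f (i + 1) ω ∈ bdry {y | ∃ j ≤ i, f j ω = y}
  x0_cube : ∀ ω, cube (x0 ω) = {y | ∃ j < 2 ^ d, f j ω = y}
  mark_nonneg : ∀ x ω, 0 ≤ mark x ω
  mark_meas : ∀ x, Measurable (mark x)
  mark_local : ∀ x (ω ω' : Env d), (∀ y ∈ cube (x0 ω), ω' y = ω y) → mark x ω' = mark x ω

/-- Condition `(K)_α` with explicit constant `ε` (parts (1), (2), (3)). -/
def CondKE {d : ℕ} (P : Env d → V d → Measure (Traj d)) (Pr : Measure (Env d))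
    (α ε : ℝ) : Prop :=
  ∃ γ : V d → ℝ, (∀ x, 0 ≤ γ x) ∧
    (∀ x ∈ cubePts d, ∫⁻ ω, (ENNReal.ofReal (Qmax ω (cube 0) x)) ^ (-(γ x)) ∂Pr < ⊤) ∧
    ∃ H : MMH d,
      (∫⁻ ω, ∏ x ∈ cubePts d,
          (ENNReal.ofReal (Qtilde P ω (cube (H.x0 ω)) 0 (H.x0 ω + x))) ^ (-(H.mark x ω)) ∂Pr
        < ⊤) ∧
      ∀ᵐ ω ∂Pr, α + ε ≤ ∑ x ∈ cubePts d, min (γ x) (H.mark x ω)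

/-- Condition `(K)_α`. -/
def CondK {d : ℕ} (P : Env d → V d → Measure (Traj d)) (Pr : Measure (Env d)) (α : ℝ) : Prop :=
  ∃ ε > (0 : ℝ), CondKE P Pr α ε

/-- Condition `(E)_0`. -/
def CondE0 {d : ℕ} (Pr : Measure (Env d)) : Prop :=
  ∀ e : Dir d, ∃ η > (0 : ℝ), ∫⁻ ω, (ENNReal.ofReal (pmf ω 0 e)) ^ (-η) ∂Pr < ⊤

/-- The coordinates of `z ∈ ℤ^d` in the rotated frame `R`. -/
def tiltCoord {d : ℕ} (R : EuclideanSpace ℝ (Fin d) ≃ₗᵢ[ℝ] EuclideanSpace ℝ (Fin d))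
    (z : V d) : Fin d → ℝ :=
  WithLp.equiv 2 (Fin d → ℝ) (R.symm ((WithLp.equiv 2 (Fin d → ℝ)).symm fun j => (z j : ℝ)))

/-- The box `B^ℓ_{L,L',L̃}`: the image under the rotation `R` of
`(-L',L) × (-L̃,L̃)^{d-1}`, intersected with `ℤ^d`. -/
def polyBox {d : ℕ} (R : EuclideanSpace ℝ (Fin d) ≃ₗᵢ[ℝ] EuclideanSpace ℝ (Fin d))
    (L L' Lt : ℝ) : Set (V d) :=
  {z | (∀ i : Fin d, (i : ℕ) = 0 → tiltCoord R z i ∈ Set.Ioo (-L') L) ∧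
       ∀ i : Fin d, (i : ℕ) ≠ 0 → tiltCoord R z i ∈ Set.Ioo (-Lt) Lt}

/-- The first coordinate vector of `ℝ^d` as an element of Euclidean space. -/
def euc1 (d : ℕ) : EuclideanSpace ℝ (Fin d) :=
  (WithLp.equiv 2 (Fin d → ℝ)).symm fun i => if (i : ℕ) = 0 then 1 else 0

/-- The polynomial condition `(P)^ℓ_M`. -/
def CondP {d : ℕ} (P : Env d → V d → Measure (Traj d)) (Pr : Measure (Env d))
    (ℓ : Fin d → ℝ) (M : ℝ) : Prop :=
  ∃ R : EuclideanSpace ℝ (Fin d) ≃ₗᵢ[ℝ] EuclideanSpace ℝ (Fin d),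
    R (euc1 d) = (WithLp.equiv 2 (Fin d → ℝ)).symm ℓ ∧
    ∀ L : ℝ, 2 / 3 * 3 ^ (29 * d) ≤ L →
      ∃ L' ≤ 5 / 4 * L, ∃ Lt ≤ 72 * L ^ 3,
        annealed P Pr 0
          {X | ∃ n, X n ∉ polyBox R L L' Lt ∧ (∀ m < n, X m ∈ polyBox R L L' Lt) ∧
                dot ℓ (X n) < L}
          ≤ ENNReal.ofReal (L ^ (-M))

/-- The backtracking time `D = inf{n ≥ 0 : X_n·ℓ < X_0·ℓ}`. -/
def Dtime {d : ℕ} (ℓ : Fin d → ℝ) (X : Traj d) : ℕ∞ :=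
  ⨅ (n : ℕ) (_ : dot ℓ (X n) < dot ℓ (X 0)), (n : ℕ∞)

/-- The triples `(S_k, R_k, M_k)` of the regeneration structure. -/
def regenAux {d : ℕ} (ℓ : Fin d → ℝ) (a : ℝ) (X : Traj d) : ℕ → ℕ∞ × ℕ∞ × EReal
  | 0 => (0, 0, ((dot ℓ (X 0) : ℝ) : EReal))
  | k + 1 =>
    let M := (regenAux ℓ a X k).2.2
    let S : ℕ∞ := ⨅ (n : ℕ) (_ : M + (a : EReal) < ((dot ℓ (X n) : ℝ) : EReal)), (n : ℕ∞)
    let R : ℕ∞ := ⨅ (n : ℕ) (_ : (n : ℕ∞) = S), (S + Dtime ℓ fun m => X (n + m))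
    (S, R, ⨆ (n : ℕ) (_ : (n : ℕ∞) ≤ R), ((dot ℓ (X n) : ℝ) : EReal))

/-- The first regeneration time `τ₁ = S_K`. -/
def tau1 {d : ℕ} (ℓ : Fin d → ℝ) (a : ℝ) (X : Traj d) : ℕ∞ :=
  ⨅ (k : ℕ) (_ : 1 ≤ k ∧ (regenAux ℓ a X k).1 ≠ ⊤ ∧ (regenAux ℓ a X k).2.1 = ⊤),
    (regenAux ℓ a X k).1

/-- The `ℓ¹` norm on `ℤ^d`. -/
def norm1 {d : ℕ} (x : V d) : ℤ := ∑ i, |x i|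

/-- `ℙ`-expectation, under the annealed law started at `x`, of `(T^ex_𝔥)^α`. -/
def cubeExitMoment {d : ℕ} (P : Env d → V d → Measure (Traj d)) (Pr : Measure (Env d))
    (x : V d) (α : ℝ) : ℝ≥0∞ :=
  ∫⁻ X, ((exitTime (cube 0) X : ℝ≥0∞)) ^ α ∂(annealed P Pr x)

/-- The uniform probability measure on the set of directions. -/
def uniformDir (d : ℕ) : Measure (Dir d) :=
  ((Fintype.card (Dir d) : ℝ≥0∞))⁻¹ • ∑ e : Dir d, Measure.dirac e

/-- The transition vector of the example environment `𝐏^expl` with strength `ε`, as a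
function of the variables `(T, i₀)`: direction `i₀` gets probability `1/T`, the remaining
"positive" directions share `1 - ε` (minus `1/T` if `i₀` is positive), and the remaining
"negative" directions share `ε` (minus `1/T` if `i₀` is negative). -/
def pexpl (d : ℕ) (ε : ℝ) (ti : ℝ × Dir d) : Dir d → ℝ := fun e =>
  if e = ti.2 then 1 / ti.1
  else if e.2 then
    (1 - ε - (if ti.2.2 then 1 / ti.1 else 0)) / ((d : ℝ) - (if ti.2.2 then 1 else 0))
  else (ε - (if ti.2.2 then 0 else 1 / ti.1)) / ((d : ℝ) - (if ti.2.2 then 0 else 1))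

/-- The law `𝐏` is the i.i.d. environment `𝐏^expl` with parameter `ε`: the common site
marginal is the law of `pexpl (T, i₀)` where `T ≥ 2d+1` a.s. with
`𝐄[T^{1/(4d)}] = ∞`, `𝐄[T^{1/(8d)}] < ∞`, and `i₀` is an independent uniform direction. -/
def IsPexpl {d : ℕ} (Pr : Measure (Env d)) (ε : ℝ) : Prop :=
  IsIID Pr ∧
  ∃ μT : Measure ℝ, IsProbabilityMeasure μT ∧
    μT {t | 2 * (d : ℝ) + 1 ≤ t} = 1 ∧
    (∫⁻ t, ENNReal.ofReal (t ^ ((1 : ℝ) / (4 * d))) ∂μT = ⊤) ∧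
    (∫⁻ t, ENNReal.ofReal (t ^ ((1 : ℝ) / (8 * d))) ∂μT < ⊤) ∧
    Pr.map (fun ω => ((ω 0).1 : Dir d → ℝ)) = (μT.prod (uniformDir d)).map (pexpl d ε)
/-- The slab `U^{ℓ'}_b(L) = {x : -bL ≤ x·ℓ' ≤ L}`. -/
def slab {d : ℕ} (ℓ' : Fin d → ℝ) (b L : ℝ) : Set (V d) :=
  {x | -(b * L) ≤ dot ℓ' x ∧ dot ℓ' x ≤ L}

/-- Sznitman's condition `(T)^ℓ`: for all unit `ℓ'` in a neighbourhood of `ℓ`, the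
probability of exiting the slab `U^{ℓ'}_b(L)` on the wrong side decays exponentially. -/
def CondT {d : ℕ} (P : Env d → V d → Measure (Traj d)) (Pr : Measure (Env d))
    (ℓ : Fin d → ℝ) : Prop :=
  ∃ r > (0 : ℝ), ∃ b > (0 : ℝ), ∀ ℓ' : Fin d → ℝ, UnitVec ℓ' → (∑ i, (ℓ' i - ℓ i) ^ 2 < r) →
    Filter.limsup
      (fun L : ℝ => L⁻¹ * Real.log
        ((annealed P Pr 0
          {X | ∃ n, X n ∉ slab ℓ' b L ∧ (∀ m < n, X m ∈ slab ℓ' b L) ∧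
            dot ℓ' (X n) < 0}).toReal))
      atTop < 0
/-! ### Auxiliary path machinery -/

section Aux

variable {d : ℕ}

lemma dirVec_inj {e e' : Dir d} (h : dirVec d e = dirVec d e') : e = e' := by
  have h1 := congrFun h e.1
  simp only [dirVec] at h1
  by_cases hf : e.1 = e'.1
  · refine Prod.ext hf ?_
    rw [if_pos trivial, if_pos hf] at h1
    cases hb : e.2 <;> cases hb' : e'.2 <;> simp_all <;> omega
  · rw [if_pos trivial, if_neg hf] at h1
    cases hb : e.2 <;> simp_all

lemma pmf_nonneg (ω : Env d) (x : V d) (e : Dir d) : 0 ≤ pmf ω x e := (ω x).2.1 e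

lemma sum_pmf (ω : Env d) (x : V d) : ∑ e : Dir d, pmf ω x e = 1 := (ω x).2.2

lemma stepProb_step (ω : Env d) (x : V d) (e : Dir d) :
    stepProb ω x (x + dirVec d e) = pmf ω x e := by
  rw [stepProb, Finset.sum_eq_single e]
  · rw [if_pos rfl]
  · intro e' _ hne
    rw [if_neg]
    intro h
    exact hne (dirVec_inj (add_left_cancel h)).symm
  · intro h; exact absurd (Finset.mem_univ e) h

/-- Position after `k` steps of the direction sequence `es`, started at `x`. -/
def posAt : {n : ℕ} → V d → (Fin n → Dir d) → ℕ → V d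
  | 0, x, _, _ => x
  | _ + 1, x, _, 0 => x
  | n + 1, x, es, k + 1 => posAt (n := n) (x + dirVec d (es 0)) (Fin.tail es) k

lemma posAt_zero {n : ℕ} (x : V d) (es : Fin n → Dir d) : posAt x es 0 = x := by
  cases n <;> rfl

lemma posAt_step : ∀ {n : ℕ} (x : V d) (es : Fin n → Dir d) (k : ℕ) (hk : k < n),
    posAt x es (k + 1) = posAt x es k + dirVec d (es ⟨k, hk⟩)
  | 0, _, _, k, hk => absurd hk (Nat.not_lt_zero k)
  | n + 1, x, es, 0, _ => by
    show posAt (x + dirVec d (es 0)) (Fin.tail es) 0 = posAt x es 0 + dirVec d (es 0)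
    rw [posAt_zero, posAt_zero]
  | n + 1, x, es, k + 1, hk => by
    show posAt (x + dirVec d (es 0)) (Fin.tail es) (k + 1)
        = posAt (x + dirVec d (es 0)) (Fin.tail es) k + dirVec d (es ⟨k + 1, hk⟩)
    rw [posAt_step (x + dirVec d (es 0)) (Fin.tail es) k (Nat.lt_of_succ_lt_succ hk)]
    rfl

/-- Probability of the nearest-neighbour path from `x` with direction sequence `es`. -/
def pathProb (ω : Env d) {n : ℕ} (x : V d) (es : Fin n → Dir d) : ℝ :=
  ∏ k : Fin n, pmf ω (posAt x es (k : ℕ)) (es k)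

lemma pathProb_nonneg (ω : Env d) {n : ℕ} (x : V d) (es : Fin n → Dir d) :
    0 ≤ pathProb ω x es :=
  Finset.prod_nonneg fun k _ => pmf_nonneg ω _ _

lemma pathProb_cons (ω : Env d) {n : ℕ} (x : V d) (es : Fin (n + 1) → Dir d) :
    pathProb ω x es = pmf ω x (es 0) * pathProb ω (x + dirVec d (es 0)) (Fin.tail es) := by
  rw [pathProb, Fin.prod_univ_succ]
  rfl

lemma sum_path_succ {n : ℕ} (F : (Fin (n + 1) → Dir d) → ℝ) :
    ∑ es : Fin (n + 1) → Dir d, F es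
      = ∑ e : Dir d, ∑ t : Fin n → Dir d, F (Fin.cons e t) :=
  calc ∑ es : Fin (n + 1) → Dir d, F es
      = ∑ p : Dir d × (Fin n → Dir d), F (Fin.cons p.1 p.2) :=
        (Fintype.sum_bijective (Fin.consEquiv fun _ => Dir d)
          (Equiv.bijective _) _ _ fun p => rfl).symm
    _ = ∑ e : Dir d, ∑ t : Fin n → Dir d, F (Fin.cons e t) :=
        Fintype.sum_prod_type (f := fun p : Dir d × (Fin n → Dir d) => F (Fin.cons p.1 p.2))

lemma sum_pathProb (ω : Env d) : ∀ (n : ℕ) (x : V d),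
    ∑ es : Fin n → Dir d, pathProb ω x es = 1 := by
  intro n
  induction n with
  | zero =>
    intro x
    rw [Fintype.sum_unique]
    simp [pathProb]
  | succ n ih =>
    intro x
    rw [sum_path_succ]
    have : ∀ e : Dir d, ∑ t : Fin n → Dir d, pathProb ω x (Fin.cons e t)
        = pmf ω x e := by
      intro e
      have : ∀ t : Fin n → Dir d, pathProb ω x (Fin.cons e t)
          = pmf ω x e * pathProb ω (x + dirVec d e) t := by
        intro t
        rw [pathProb_cons]
        simp [Fin.cons_zero, Fin.tail_cons]
      rw [Finset.sum_congr rfl fun t _ => this t, ← Finset.mul_sum, ih, mul_one]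
    rw [Finset.sum_congr rfl fun e _ => this e, sum_pmf]

lemma sum_pathProb_weight (ω : Env d) (w : Dir d → ℝ) (hw : ∀ e, 0 ≤ w e) (K : ℝ)
    (hK : 0 ≤ K) (hsite : ∀ y : V d, ∑ e : Dir d, pmf ω y e * w e ≤ K) :
    ∀ (n : ℕ) (x : V d),
      ∑ es : Fin n → Dir d, pathProb ω x es * ∏ k : Fin n, w (es k) ≤ K ^ n := by
  intro n
  induction n with
  | zero =>
    intro x
    rw [Fintype.sum_unique]
    simp [pathProb]
  | succ n ih =>
    intro x
    rw [sum_path_succ]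
    have key : ∀ e : Dir d, ∑ t : Fin n → Dir d,
        pathProb ω x (Fin.cons e t) * ∏ k : Fin (n+1), w ((Fin.cons e t : Fin (n+1) → Dir d) k)
        ≤ pmf ω x e * w e * K ^ n := by
      intro e
      have heq : ∀ t : Fin n → Dir d,
          pathProb ω x (Fin.cons e t) * ∏ k : Fin (n+1), w ((Fin.cons e t : Fin (n+1) → Dir d) k)
          = pmf ω x e * w e *
            (pathProb ω (x + dirVec d e) t * ∏ k : Fin n, w (t k)) := by
        intro t
        rw [pathProb_cons, Fin.prod_univ_succ]
        simp only [Fin.cons_zero, Fin.cons_succ, Fin.tail_cons]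
        ring
      rw [Finset.sum_congr rfl fun t _ => heq t, ← Finset.mul_sum]
      exact mul_le_mul_of_nonneg_left (ih _)
        (mul_nonneg (pmf_nonneg ω x e) (hw e))
    calc ∑ e : Dir d, ∑ t : Fin n → Dir d,
          pathProb ω x (Fin.cons e t) * ∏ k : Fin (n+1), w ((Fin.cons e t : Fin (n+1) → Dir d) k)
        ≤ ∑ e : Dir d, pmf ω x e * w e * K ^ n :=
          Finset.sum_le_sum fun e _ => key e
      _ = (∑ e : Dir d, pmf ω x e * w e) * K ^ n := by rw [Finset.sum_mul]
      _ ≤ K * K ^ n := mul_le_mul_of_nonneg_right (hsite x) (pow_nonneg hK n)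
      _ = K ^ (n + 1) := (pow_succ' K n).symm

end Aux
section Cyl

variable {d : ℕ}

lemma measurableSet_traj (n : ℕ) (A : Set (V d)) : MeasurableSet {X : Traj d | X n ∈ A} :=
  measurable_pi_apply n (A.to_countable.measurableSet)

/-- The cylinder event determined by the path from `x` with direction sequence `es`. -/
def cyl (x : V d) {n : ℕ} (es : Fin n → Dir d) : Set (Traj d) :=
  {X | ∀ k ≤ n, X k = posAt x es k}

lemma cyl_measurableSet (x : V d) {n : ℕ} (es : Fin n → Dir d) :
    MeasurableSet (cyl x es) := by
  have : cyl x es = ⋂ k ∈ Set.Iic n, {X : Traj d | X k ∈ ({posAt x es k} : Set (V d))} := by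
    ext X
    simp [cyl, Set.mem_iInter]
  rw [this]
  exact MeasurableSet.biInter (Set.to_countable _) fun k _ => measurableSet_traj k _

lemma cyl_disjoint (x : V d) {n : ℕ} {es es' : Fin n → Dir d} (h : es ≠ es') :
    cyl x es ∩ cyl x es' = ∅ := by
  rw [Set.eq_empty_iff_forall_notMem]
  rintro X ⟨h1, h2⟩
  apply h
  funext k
  have hk1 : (k : ℕ) + 1 ≤ n := k.isLt
  have hk0 : (k : ℕ) ≤ n := le_of_lt k.isLt
  have e1 : X ((k : ℕ) + 1) = X (k : ℕ) + dirVec d (es ⟨k, k.isLt⟩) := by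
    rw [h1 _ hk1, h1 _ hk0, posAt_step x es k k.isLt]
  have e2 : X ((k : ℕ) + 1) = X (k : ℕ) + dirVec d (es' ⟨k, k.isLt⟩) := by
    rw [h2 _ hk1, h2 _ hk0, posAt_step x es' k k.isLt]
  have := dirVec_inj (add_left_cancel (e1.symm.trans e2))
  simpa using this

variable {P : Env d → V d → Measure (Traj d)}

lemma quenched_cyl (hP : IsQuenched P) (ω : Env d) (x : V d) {n : ℕ} (es : Fin n → Dir d) :
    (P ω x (cyl x es)).toReal = pathProb ω x es := by
  have h := hP.2.2 ω x n (fun k => posAt x es k)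
  have hcyl : cyl x es = {X : Traj d | ∀ k ≤ n, X k = posAt x es k} := rfl
  rw [hcyl, h, if_pos (posAt_zero x es), one_mul, ← Fin.prod_univ_eq_prod_range]
  refine Finset.prod_congr rfl fun k _ => ?_
  rw [posAt_step x es k k.isLt, stepProb_step]

lemma quenched_cyl_eq (hP : IsQuenched P) (ω : Env d) (x : V d) {n : ℕ}
    (es : Fin n → Dir d) :
    P ω x (cyl x es) = ENNReal.ofReal (pathProb ω x es) := by
  haveI := hP.1 ω x
  rw [← quenched_cyl hP ω x es, ENNReal.ofReal_toReal (measure_ne_top _ _)]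

lemma quenched_union (hP : IsQuenched P) (ω : Env d) (x : V d) (n : ℕ) :
    P ω x (⋃ es : Fin n → Dir d, cyl x es) = 1 := by
  rw [measure_iUnion ?_ fun es => cyl_measurableSet x es]
  · rw [tsum_fintype]
    have : ∀ es : Fin n → Dir d, P ω x (cyl x es) = ENNReal.ofReal (pathProb ω x es) :=
      fun es => quenched_cyl_eq hP ω x es
    rw [Finset.sum_congr rfl fun es _ => this es,
      ← ENNReal.ofReal_sum_of_nonneg fun es _ => pathProb_nonneg ω x es,
      sum_pathProb ω n x, ENNReal.ofReal_one]
  · intro a b hab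
    exact Set.disjoint_iff_inter_eq_empty.mpr (cyl_disjoint x hab)

lemma quenched_event_le (hP : IsQuenched P) (ω : Env d) (x : V d) {n : ℕ}
    (G : Set (Traj d)) (S : Finset (Fin n → Dir d))
    (hGS : ∀ es ∉ S, G ∩ cyl x es = ∅) :
    (P ω x G).toReal ≤ ∑ es ∈ S, pathProb ω x es := by
  haveI := hP.1 ω x
  have hUmeas : MeasurableSet (⋃ es : Fin n → Dir d, cyl x es) :=
    MeasurableSet.iUnion fun es => cyl_measurableSet x es
  have hcompl : P ω x (⋃ es : Fin n → Dir d, cyl x es)ᶜ = 0 := by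
    rw [measure_compl hUmeas (measure_ne_top _ _), quenched_union hP ω x n, measure_univ,
      tsub_self]
  have step1 : P ω x G ≤ P ω x (G ∩ ⋃ es : Fin n → Dir d, cyl x es) := by
    have hle := measure_le_inter_add_diff (P ω x) G (⋃ es : Fin n → Dir d, cyl x es)
    have h0 : P ω x (G \ ⋃ es : Fin n → Dir d, cyl x es) = 0 :=
      measure_mono_null (fun X hX => hX.2) hcompl
    rwa [h0, add_zero] at hle
  have step2 : G ∩ (⋃ es : Fin n → Dir d, cyl x es) ⊆ ⋃ es ∈ S, cyl x es := by
    rintro X ⟨hXG, hXU⟩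
    rcases Set.mem_iUnion.1 hXU with ⟨es, hXes⟩
    by_cases hes : es ∈ S
    · exact Set.mem_biUnion hes hXes
    · exact absurd (Set.mem_inter hXG hXes)
        (by rw [hGS es hes]; exact Set.notMem_empty X)
  have hmain : P ω x G ≤ ENNReal.ofReal (∑ es ∈ S, pathProb ω x es) := by
    calc P ω x G ≤ P ω x (⋃ es ∈ S, cyl x es) := le_trans step1 (measure_mono step2)
      _ ≤ ∑ es ∈ S, P ω x (cyl x es) := measure_biUnion_finset_le S _
      _ = ∑ es ∈ S, ENNReal.ofReal (pathProb ω x es) :=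
          Finset.sum_congr rfl fun es _ => quenched_cyl_eq hP ω x es
      _ = ENNReal.ofReal (∑ es ∈ S, pathProb ω x es) :=
          (ENNReal.ofReal_sum_of_nonneg fun es _ => pathProb_nonneg ω x es).symm
  exact ENNReal.toReal_le_of_le_ofReal
    (Finset.sum_nonneg fun es _ => pathProb_nonneg ω x es) hmain

lemma dot_add (ℓ : Fin d → ℝ) (x y : V d) : dot ℓ (x + y) = dot ℓ x + dot ℓ y := by
  simp only [dot, Pi.add_apply, Int.cast_add, mul_add]
  rw [Finset.sum_add_distrib]

lemma dot_zero (ℓ : Fin d → ℝ) : dot ℓ (0 : V d) = 0 := by simp [dot]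

lemma dot_dirVec (ℓ : Fin d → ℝ) (e : Dir d) :
    dot ℓ (dirVec d e) = if e.2 then ℓ e.1 else -ℓ e.1 := by
  rw [dot, Finset.sum_eq_single e.1]
  · simp only [dirVec, if_pos rfl]
    cases hb : e.2 <;> simp
  · intro i _ hne
    simp [dirVec, hne]
  · intro h; exact absurd (Finset.mem_univ _) h

lemma dot_posAt (ℓ : Fin d → ℝ) : ∀ {n : ℕ} (x : V d) (es : Fin n → Dir d),
    dot ℓ (posAt x es n) = dot ℓ x + ∑ k : Fin n, dot ℓ (dirVec d (es k)) := by
  intro n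
  induction n with
  | zero => intro x es; simp [posAt_zero]
  | succ n ih =>
    intro x es
    have hstep : posAt x es (n + 1) = posAt (x + dirVec d (es 0)) (Fin.tail es) n := rfl
    rw [hstep, ih, dot_add, Fin.sum_univ_succ]
    have htail : ∑ k : Fin n, dot ℓ (dirVec d (Fin.tail es k))
        = ∑ k : Fin n, dot ℓ (dirVec d (es k.succ)) := rfl
    rw [htail]
    ring

lemma chernoff_quenched (hP : IsQuenched P) (ω : Env d) (ℓv : Fin d → ℝ) (s r : ℝ)
    (n : ℕ) (K : ℝ) (hK : 0 ≤ K)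
    (hsite : ∀ y : V d, ∑ e : Dir d, pmf ω y e * Real.exp (s * dot ℓv (dirVec d e)) ≤ K) :
    (P ω 0 {X : Traj d | r ≤ s * dot ℓv (X n)}).toReal ≤ Real.exp (-r) * K ^ n := by
  classical
  set w : Dir d → ℝ := fun e => Real.exp (s * dot ℓv (dirVec d e)) with hw
  set S : Finset (Fin n → Dir d) :=
    Finset.univ.filter (fun es => r ≤ s * dot ℓv (posAt 0 es n)) with hS
  have hGS : ∀ es ∉ S, {X : Traj d | r ≤ s * dot ℓv (X n)} ∩ cyl 0 es = ∅ := by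
    intro es hes
    rw [Set.eq_empty_iff_forall_notMem]
    rintro X ⟨hX1, hX2⟩
    have hXn := hX2 n le_rfl
    apply hes
    rw [hS, Finset.mem_filter]
    refine ⟨Finset.mem_univ _, ?_⟩
    rw [← hXn]
    exact hX1
  refine le_trans (quenched_event_le hP ω 0 _ S hGS) ?_
  have key : ∀ es ∈ S, pathProb ω 0 es
      ≤ Real.exp (-r) * (pathProb ω 0 es * ∏ k : Fin n, w (es k)) := by
    intro es hes
    rw [hS, Finset.mem_filter] at hes
    have hdot : s * dot ℓv (posAt 0 es n) = ∑ k : Fin n, s * dot ℓv (dirVec d (es k)) := by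
      rw [dot_posAt, dot_zero, zero_add, Finset.mul_sum]
    have hprod : ∏ k : Fin n, w (es k) = Real.exp (s * dot ℓv (posAt 0 es n)) := by
      rw [hdot, Real.exp_sum]
    have hone : (1 : ℝ) ≤ Real.exp (-r) * ∏ k : Fin n, w (es k) := by
      rw [hprod, ← Real.exp_add]
      refine Real.one_le_exp ?_
      linarith [hes.2]
    calc pathProb ω 0 es = pathProb ω 0 es * 1 := (mul_one _).symm
      _ ≤ pathProb ω 0 es * (Real.exp (-r) * ∏ k : Fin n, w (es k)) :=
          mul_le_mul_of_nonneg_left hone (pathProb_nonneg ω 0 es)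
      _ = Real.exp (-r) * (pathProb ω 0 es * ∏ k : Fin n, w (es k)) := by ring
  calc ∑ es ∈ S, pathProb ω 0 es
      ≤ ∑ es ∈ S, Real.exp (-r) * (pathProb ω 0 es * ∏ k : Fin n, w (es k)) :=
        Finset.sum_le_sum key
    _ = Real.exp (-r) * ∑ es ∈ S, pathProb ω 0 es * ∏ k : Fin n, w (es k) := by
        rw [Finset.mul_sum]
    _ ≤ Real.exp (-r) * ∑ es : Fin n → Dir d, pathProb ω 0 es * ∏ k : Fin n, w (es k) := by
        refine mul_le_mul_of_nonneg_left ?_ (Real.exp_nonneg _)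
        refine Finset.sum_le_sum_of_subset_of_nonneg (Finset.subset_univ S) ?_
        intro es _ _
        exact mul_nonneg (pathProb_nonneg ω 0 es)
          (Finset.prod_nonneg fun k _ => Real.exp_nonneg _)
    _ ≤ Real.exp (-r) * K ^ n := mul_le_mul_of_nonneg_left
        (sum_pathProb_weight ω w (fun e => Real.exp_nonneg _) K hK hsite n 0)
        (Real.exp_nonneg _)

end Cyl
section EnvLaw

variable {d : ℕ} {P : Env d → V d → Measure (Traj d)} {Pr : Measure (Env d)} {ε : ℝ}

lemma sum_pexpl_pos (hd : 2 ≤ d) (ε t : ℝ) (e0 : Dir d) :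
    ∑ i : Fin d, pexpl d ε (t, e0) (i, true) = 1 - ε := by
  obtain ⟨i0, b0⟩ := e0
  have hd2 : (2 : ℝ) ≤ (d : ℝ) := by exact_mod_cast hd
  have hdne : (d : ℝ) ≠ 0 := by linarith
  cases b0 with
  | false =>
    have hval : ∀ i : Fin d, pexpl d ε (t, (i0, false)) (i, true) = (1 - ε) / d := by
      intro i
      simp only [pexpl]
      rw [if_neg (by simp)]
      norm_num
    rw [Finset.sum_congr rfl fun i _ => hval i, Finset.sum_const, Finset.card_univ,
      Fintype.card_fin, nsmul_eq_mul]
    field_simp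
  | true =>
    have hval : ∀ i : Fin d, pexpl d ε (t, (i0, true)) (i, true)
        = (1 - ε - 1 / t) / ((d : ℝ) - 1)
          + (if i = i0 then 1 / t - (1 - ε - 1 / t) / ((d : ℝ) - 1) else 0) := by
      intro i
      by_cases hi : i = i0
      · subst hi
        simp only [pexpl]
        simp
      · simp only [pexpl]
        simp [hi]
    rw [Finset.sum_congr rfl fun i _ => hval i, Finset.sum_add_distrib,
      Finset.sum_const, Finset.card_univ, Fintype.card_fin, nsmul_eq_mul,
      Finset.sum_ite_eq' Finset.univ i0, if_pos (Finset.mem_univ _)]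
    have hd1' : (d : ℝ) - 1 ≠ 0 := by linarith
    have hCC : ((1 - ε - 1 / t) / ((d : ℝ) - 1)) * ((d : ℝ) - 1) = 1 - ε - 1 / t :=
      div_mul_cancel₀ _ hd1'
    nlinarith [hCC]

lemma measurable_pexpl (d : ℕ) (ε : ℝ) : Measurable (pexpl d ε) := by
  refine measurable_pi_lambda _ fun e => ?_
  have : (fun ti : ℝ × Dir d => pexpl d ε ti e)
      = fun ti : ℝ × Dir d =>
        (fun p : ℝ × Dir d => if e = p.2 then 1 / p.1
          else if e.2 then
            (1 - ε - (if p.2.2 then 1 / p.1 else 0)) / ((d : ℝ) - (if p.2.2 then 1 else 0))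
          else (ε - (if p.2.2 then 0 else 1 / p.1)) / ((d : ℝ) - (if p.2.2 then 0 else 1)))
          ti := rfl
  rw [this]
  refine measurable_from_prod_countable_left fun e0 => ?_
  have m1 : Measurable fun t : ℝ => 1 / t := measurable_const.div measurable_id
  by_cases h1 : e = e0 <;> by_cases h2 : e.2 <;> by_cases h3 : e0.2 <;>
    simp only [h1, h2, h3, if_true, if_false, eq_self_iff_true] <;>
    first
      | exact m1
      | exact ((measurable_const.sub m1).div_const _)
      | exact ((measurable_const.sub measurable_const).div_const _)
      | { simp only [if_neg h1]
          first
            | exact ((measurable_const.sub m1).div_const _)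
            | exact ((measurable_const.sub measurable_const).div_const _) }

lemma ae_good (hd : 2 ≤ d) (hPr : IsPexpl Pr ε) :
    ∀ᵐ ω ∂Pr, ∀ x : V d, ∑ i : Fin d, pmf ω x (i, true) = 1 - ε := by
  obtain ⟨⟨hprob, hindep, hmarg⟩, μT, hμT, hsupp, h4, h8, hmap⟩ := hPr
  set S : Set (Dir d → ℝ) := {p | ∑ i : Fin d, p (i, true) = 1 - ε} with hSdef
  have hSmeas : MeasurableSet S := by
    have hm : Measurable fun p : Dir d → ℝ => ∑ i : Fin d, p (i, true) :=
      Finset.measurable_sum _ fun i _ => measurable_pi_apply _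
    exact hm (measurableSet_singleton (1 - ε))
  have hg : Measurable fun ω : Env d => ((ω 0).1 : Dir d → ℝ) :=
    measurable_subtype_coe.comp (measurable_pi_apply 0)
  have hzero : Pr ((fun ω : Env d => ((ω 0).1 : Dir d → ℝ)) ⁻¹' Sᶜ) = 0 := by
    have h1 : Pr.map (fun ω : Env d => ((ω 0).1 : Dir d → ℝ)) Sᶜ = 0 := by
      rw [hmap, Measure.map_apply (measurable_pexpl d ε) hSmeas.compl]
      have hempty : pexpl d ε ⁻¹' Sᶜ = ∅ := by
        rw [Set.eq_empty_iff_forall_notMem]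
        rintro ⟨t, e0⟩ hti
        exact hti (sum_pexpl_pos hd ε t e0)
      rw [hempty, measure_empty]
    rwa [Measure.map_apply hg hSmeas.compl] at h1
  set S' : Set (ProbVec d) := {p : ProbVec d | (p.1 : Dir d → ℝ) ∈ S} with hS'
  have hS'meas : MeasurableSet S' := measurable_subtype_coe hSmeas
  have hx : ∀ x : V d, Pr ((fun ω : Env d => ω x) ⁻¹' S'ᶜ) = 0 := by
    intro x
    have hx1 : Pr.map (fun ω : Env d => ω x) S'ᶜ = Pr.map (fun ω : Env d => ω 0) S'ᶜ := by
      rw [hmarg x]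
    rw [Measure.map_apply (measurable_pi_apply x) hS'meas.compl,
      Measure.map_apply (measurable_pi_apply 0) hS'meas.compl] at hx1
    exact hx1.trans hzero
  rw [ae_all_iff]
  intro x
  rw [ae_iff]
  exact hx x

lemma annealed_apply (hP : IsQuenched P) (G : Set (Traj d)) (hG : MeasurableSet G) :
    annealed P Pr 0 G = ∫⁻ ω, P ω 0 G ∂Pr :=
  Measure.bind_apply hG (hP.2.1 0).aemeasurable

lemma annealed_prob (hP : IsQuenched P) (hprob : IsProbabilityMeasure Pr) :
    IsProbabilityMeasure (annealed P Pr 0) := by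
  constructor
  rw [annealed_apply hP _ MeasurableSet.univ]
  have heq : ∀ ω : Env d, P ω 0 Set.univ = 1 := fun ω => (hP.1 ω 0).measure_univ
  rw [lintegral_congr heq, lintegral_one, measure_univ]

lemma annealed_le (hP : IsQuenched P) (hprob : IsProbabilityMeasure Pr)
    (G : Set (Traj d)) (hG : MeasurableSet G) (β : ℝ) (hβ : 0 ≤ β)
    (h : ∀ᵐ ω ∂Pr, (P ω 0 G).toReal ≤ β) :
    annealed P Pr 0 G ≤ ENNReal.ofReal β := by
  rw [annealed_apply hP G hG]
  have h' : ∀ᵐ ω ∂Pr, P ω 0 G ≤ ENNReal.ofReal β := by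
    filter_upwards [h] with ω hω
    haveI := hP.1 ω 0
    exact (ENNReal.le_ofReal_iff_toReal_le (measure_ne_top _ _) hβ).2 hω
  calc ∫⁻ ω, P ω 0 G ∂Pr ≤ ∫⁻ _, ENNReal.ofReal β ∂Pr := lintegral_mono_ae h'
    _ = ENNReal.ofReal β := by rw [lintegral_const, measure_univ, mul_one]

lemma annealed_ge (hP : IsQuenched P) (hprob : IsProbabilityMeasure Pr)
    (G : Set (Traj d)) (hG : MeasurableSet G) (β : ℝ≥0∞)
    (h : ∀ᵐ ω ∂Pr, β ≤ P ω 0 G) : β ≤ annealed P Pr 0 G := by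
  rw [annealed_apply hP G hG]
  calc β = ∫⁻ _, β ∂Pr := by rw [lintegral_const, measure_univ, mul_one]
    _ ≤ ∫⁻ ω, P ω 0 G ∂Pr := lintegral_mono_ae h

lemma sum_pmf_neg (ω : Env d) (x : V d)
    (hpos : ∑ i : Fin d, pmf ω x (i, true) = 1 - ε) :
    ∑ i : Fin d, pmf ω x (i, false) = ε := by
  have htot := sum_pmf ω x
  rw [Fintype.sum_prod_type] at htot
  have hb : ∀ i : Fin d, ∑ b : Bool, pmf ω x (i, b)
      = pmf ω x (i, true) + pmf ω x (i, false) := fun i => Fintype.sum_bool _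
  rw [Finset.sum_congr rfl fun i _ => hb i, Finset.sum_add_distrib, hpos] at htot
  linarith

lemma site_weight (ω : Env d) (x : V d)
    (hpos : ∑ i : Fin d, pmf ω x (i, true) = 1 - ε)
    (w : Dir d → ℝ) (Wp Wn : ℝ) (hp : ∀ i, w (i, true) ≤ Wp) (hn : ∀ i, w (i, false) ≤ Wn) :
    ∑ e : Dir d, pmf ω x e * w e ≤ (1 - ε) * Wp + ε * Wn := by
  have hneg := sum_pmf_neg ω x hpos
  rw [Fintype.sum_prod_type]
  have hb : ∀ i : Fin d, ∑ b : Bool, pmf ω x (i, b) * w (i, b)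
      ≤ pmf ω x (i, true) * Wp + pmf ω x (i, false) * Wn := by
    intro i
    rw [Fintype.sum_bool]
    have h1 := mul_le_mul_of_nonneg_left (hp i) (pmf_nonneg ω x (i, true))
    have h2 := mul_le_mul_of_nonneg_left (hn i) (pmf_nonneg ω x (i, false))
    linarith
  calc ∑ i : Fin d, ∑ b : Bool, pmf ω x (i, b) * w (i, b)
      ≤ ∑ i : Fin d, (pmf ω x (i, true) * Wp + pmf ω x (i, false) * Wn) :=
        Finset.sum_le_sum fun i _ => hb i
    _ = (∑ i : Fin d, pmf ω x (i, true)) * Wp + (∑ i : Fin d, pmf ω x (i, false)) * Wn := by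
        rw [Finset.sum_add_distrib, Finset.sum_mul, Finset.sum_mul]
    _ = (1 - ε) * Wp + ε * Wn := by rw [hpos, hneg]

lemma exp_le_quad {x : ℝ} (hx : |x| ≤ 1) : Real.exp x ≤ 1 + x + x ^ 2 := by
  have h := Real.exp_bound hx (by norm_num : 0 < 2)
  have hs : ∑ i ∈ Finset.range 2, x ^ i / (Nat.factorial i) = 1 + x := by
    simp [Finset.sum_range_succ, Nat.factorial]
  rw [hs] at h
  have h2 := (abs_le.mp h).2
  have hsq : |x| ^ 2 = x ^ 2 := sq_abs x
  rw [hsq] at h2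
  norm_num [Nat.factorial] at h2
  nlinarith [sq_nonneg x]

end EnvLaw
section Main

variable {d : ℕ} {P : Env d → V d → Measure (Traj d)} {Pr : Measure (Env d)} {ε : ℝ}

lemma part1 (hP : IsQuenched P) (ω : Env d)
    (hg : ∀ x : V d, ∑ i : Fin d, pmf ω x (i, true) = 1 - ε) (hε1 : ε ≤ 1) :
    ((P ω 0) {X : Traj d | dot (fun _ => (1 : ℝ)) (X 1) = 1}).toReal = 1 - ε := by
  classical
  haveI := hP.1 ω 0
  set A := {X : Traj d | dot (fun _ => (1 : ℝ)) (X 1) = 1} with hA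
  set S : Finset (Fin 1 → Dir d) := Finset.univ.filter (fun es => (es 0).2 = true) with hS
  have hdotdir : ∀ e : Dir d, dot (fun _ => (1 : ℝ)) (dirVec d e)
      = if e.2 then 1 else -1 := by
    intro e
    have hdd := dot_dirVec (fun _ => (1 : ℝ)) e
    simpa using hdd
  have hpos1 : ∀ es : Fin 1 → Dir d, posAt (0 : V d) es 1 = 0 + dirVec d (es 0) := by
    intro es
    have h0 : (⟨0, Nat.one_pos⟩ : Fin 1) = 0 := by decide
    rw [posAt_step (0 : V d) es 0 Nat.one_pos, posAt_zero, h0]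
  have hdotpos : ∀ es : Fin 1 → Dir d,
      dot (fun _ => (1 : ℝ)) (posAt (0 : V d) es 1) = if (es 0).2 then 1 else -1 := by
    intro es
    rw [hpos1 es, dot_add, dot_zero, zero_add, hdotdir]
  have hpp : ∀ es : Fin 1 → Dir d, pathProb ω 0 es = pmf ω 0 (es 0) := by
    intro es
    rw [pathProb, Fin.prod_univ_one]
    rfl
  have hsumS : ∑ es ∈ S, pathProb ω 0 es = 1 - ε := by
    rw [hS, Finset.sum_filter]
    have h1 : ∀ es : Fin 1 → Dir d,
        (if (es 0).2 = true then pathProb ω 0 es else 0)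
        = (fun e : Dir d => if e.2 = true then pmf ω 0 e else 0) (es 0) := by
      intro es
      by_cases hb : (es 0).2 = true <;> simp [hb, hpp es]
    rw [Finset.sum_congr rfl fun es _ => h1 es]
    have hsum2 : ∑ es : Fin 1 → Dir d, (fun e : Dir d => if e.2 = true then pmf ω 0 e else 0) (es 0)
        = ∑ e : Dir d, (if e.2 = true then pmf ω 0 e else 0) :=
      Fintype.sum_bijective (Equiv.funUnique (Fin 1) (Dir d)) (Equiv.bijective _) _ _
        (fun es => rfl)
    rw [hsum2, Fintype.sum_prod_type]
    have h2 : ∀ i : Fin d, ∑ b : Bool, (if b = true then pmf ω 0 (i, b) else 0)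
        = pmf ω 0 (i, true) := by
      intro i
      rw [Fintype.sum_bool]
      simp
    rw [Finset.sum_congr rfl fun i _ => h2 i]
    exact hg 0
  -- upper bound
  have hupper : (P ω 0 A).toReal ≤ 1 - ε := by
    have hGS : ∀ es ∉ S, A ∩ cyl (0 : V d) es = ∅ := by
      intro es hes
      rw [hS, Finset.mem_filter] at hes
      push_neg at hes
      have hb : (es 0).2 = false := by
        cases hbb : (es 0).2
        · rfl
        · exact absurd hbb (hes (Finset.mem_univ _))
      rw [Set.eq_empty_iff_forall_notMem]
      rintro X ⟨hX1, hX2⟩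
      have hX1' : dot (fun _ => (1 : ℝ)) (X 1) = 1 := hX1
      have hXn := hX2 1 le_rfl
      have hneg : dot (fun _ => (1 : ℝ)) (X 1) = -1 := by
        rw [hXn, hdotpos es, hb]
        norm_num
      linarith
    calc (P ω 0 A).toReal ≤ ∑ es ∈ S, pathProb ω 0 es := quenched_event_le hP ω 0 A S hGS
      _ = 1 - ε := hsumS
  -- lower bound
  have hlower : 1 - ε ≤ (P ω 0 A).toReal := by
    have hsub : ∀ es ∈ S, cyl (0 : V d) es ⊆ A := by
      intro es hes X hX
      rw [hS, Finset.mem_filter] at hes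
      have hXn := hX 1 le_rfl
      show dot (fun _ => (1 : ℝ)) (X 1) = 1
      rw [hXn, hdotpos es, hes.2]
      norm_num
    have hdisj : (↑S : Set (Fin 1 → Dir d)).PairwiseDisjoint (fun es => cyl (0 : V d) es) := by
      intro a _ b _ hab
      exact Set.disjoint_iff_inter_eq_empty.mpr (cyl_disjoint 0 hab)
    have hle : ENNReal.ofReal (1 - ε) ≤ P ω 0 A := by
      calc ENNReal.ofReal (1 - ε) = ∑ es ∈ S, ENNReal.ofReal (pathProb ω 0 es) := by
            rw [← ENNReal.ofReal_sum_of_nonneg fun es _ => pathProb_nonneg ω 0 es, hsumS]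
        _ = ∑ es ∈ S, P ω 0 (cyl (0 : V d) es) :=
            Finset.sum_congr rfl fun es _ => (quenched_cyl_eq hP ω 0 es).symm
        _ = P ω 0 (⋃ es ∈ S, cyl (0 : V d) es) :=
            (measure_biUnion_finset hdisj fun es _ => cyl_measurableSet 0 es).symm
        _ ≤ P ω 0 A := measure_mono (Set.iUnion₂_subset hsub)
    calc (1 : ℝ) - ε = (ENNReal.ofReal (1 - ε)).toReal :=
          (ENNReal.toReal_ofReal (by linarith)).symm
      _ ≤ (P ω 0 A).toReal := ENNReal.toReal_mono (measure_ne_top _ _) hle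
  linarith

lemma dev_bound (hP : IsQuenched P) (hprob : IsProbabilityMeasure Pr)
    (hgood : ∀ᵐ ω ∂Pr, ∀ x : V d, ∑ i : Fin d, pmf ω x (i, true) = 1 - ε)
    (hε0 : 0 < ε) (hε5 : ε < 1 / 5) (s : ℝ) (hs : |s| ≤ 1) (n : ℕ) (r : ℝ) :
    annealed P Pr 0 {X : Traj d | r ≤ s * dot (fun _ => (1 : ℝ)) (X n)}
      ≤ ENNReal.ofReal (Real.exp (-r) * Real.exp (((1 - 2 * ε) * s + s ^ 2) * n)) := by
  have hKpos : (0 : ℝ) ≤ (1 - ε) * Real.exp s + ε * Real.exp (-s) :=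
    add_nonneg (mul_nonneg (by linarith) (Real.exp_nonneg _))
      (mul_nonneg hε0.le (Real.exp_nonneg _))
  have hKle : (1 - ε) * Real.exp s + ε * Real.exp (-s)
      ≤ Real.exp ((1 - 2 * ε) * s + s ^ 2) := by
    have h1 := exp_le_quad hs
    have h2 := exp_le_quad (x := -s) (by rwa [abs_neg])
    have h3 := Real.add_one_le_exp ((1 - 2 * ε) * s + s ^ 2)
    nlinarith [mul_le_mul_of_nonneg_left h1 (by linarith : (0 : ℝ) ≤ 1 - ε),
      mul_le_mul_of_nonneg_left h2 hε0.le]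
  have hquench : ∀ᵐ ω ∂Pr, (P ω 0 {X : Traj d | r ≤ s * dot (fun _ => (1 : ℝ)) (X n)}).toReal
      ≤ Real.exp (-r) * ((1 - ε) * Real.exp s + ε * Real.exp (-s)) ^ n := by
    filter_upwards [hgood] with ω hg
    refine chernoff_quenched hP ω (fun _ => (1 : ℝ)) s r n _ hKpos fun y => ?_
    have hw := site_weight (ε := ε) ω y (hg y)
      (fun e => Real.exp (s * dot (fun _ => (1 : ℝ)) (dirVec d e)))
      (Real.exp s) (Real.exp (-s)) ?_ ?_
    · exact hw
    · intro i
      show Real.exp (s * dot (fun _ => (1 : ℝ)) (dirVec d (i, true))) ≤ Real.exp s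
      rw [dot_dirVec]
      norm_num
    · intro i
      show Real.exp (s * dot (fun _ => (1 : ℝ)) (dirVec d (i, false))) ≤ Real.exp (-s)
      rw [dot_dirVec]
      norm_num
  have hmeas : MeasurableSet {X : Traj d | r ≤ s * dot (fun _ => (1 : ℝ)) (X n)} :=
    measurableSet_traj n {y : V d | r ≤ s * dot (fun _ => (1 : ℝ)) y}
  refine le_trans (annealed_le hP hprob _ hmeas _
    (mul_nonneg (Real.exp_nonneg _) (pow_nonneg hKpos n)) hquench) ?_
  refine ENNReal.ofReal_le_ofReal ?_
  refine mul_le_mul_of_nonneg_left ?_ (Real.exp_nonneg _)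
  calc ((1 - ε) * Real.exp s + ε * Real.exp (-s)) ^ n
      ≤ Real.exp ((1 - 2 * ε) * s + s ^ 2) ^ n := pow_le_pow_left₀ hKpos hKle n
    _ = Real.exp (((1 - 2 * ε) * s + s ^ 2) * n) := by
        rw [mul_comm ((1 - 2 * ε) * s + s ^ 2) (n : ℝ), Real.exp_nat_mul]

lemma conc2 (hP : IsQuenched P) (hprob : IsProbabilityMeasure Pr)
    (hgood : ∀ᵐ ω ∂Pr, ∀ x : V d, ∑ i : Fin d, pmf ω x (i, true) = 1 - ε)
    (hε0 : 0 < ε) (hε5 : ε < 1 / 5) :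
    ∀ᵐ X ∂(annealed P Pr 0),
      Tendsto (fun n : ℕ => dot (fun _ => (1 : ℝ)) (X n) / n) atTop (𝓝 (1 - 2 * ε)) := by
  classical
  set m : ℝ := 1 - 2 * ε with hm
  -- the bad sets
  set Bp : ℕ → ℕ → Set (Traj d) := fun j n =>
    {X : Traj d | (1 / ((j : ℝ) + 1) / 2) * ((m + 1 / ((j : ℝ) + 1)) * n)
      ≤ (1 / ((j : ℝ) + 1) / 2) * dot (fun _ => (1 : ℝ)) (X n)} with hBp
  set Bm : ℕ → ℕ → Set (Traj d) := fun j n =>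
    {X : Traj d | -(1 / ((j : ℝ) + 1) / 2) * ((m - 1 / ((j : ℝ) + 1)) * n)
      ≤ -(1 / ((j : ℝ) + 1) / 2) * dot (fun _ => (1 : ℝ)) (X n)} with hBm
  have hδpos : ∀ j : ℕ, (0 : ℝ) < 1 / ((j : ℝ) + 1) := fun j => by positivity
  have hδle : ∀ j : ℕ, 1 / ((j : ℝ) + 1) ≤ 1 := fun j => by
    rw [div_le_one (by positivity)]
    linarith [Nat.cast_nonneg (α := ℝ) j]
  -- summable bounds
  have key : ∀ (j : ℕ) (B : ℕ → Set (Traj d)),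
      (∀ n, annealed P Pr 0 (B n)
        ≤ ENNReal.ofReal (Real.exp (-(1 / ((j : ℝ) + 1)) ^ 2 / 4) ^ n)) →
      ∀ᵐ X ∂(annealed P Pr 0), ∀ᶠ n in atTop, X ∉ B n := by
    intro j B hB
    refine MeasureTheory.ae_eventually_notMem ?_
    have hρ : Real.exp (-(1 / ((j : ℝ) + 1)) ^ 2 / 4) < 1 := by
      rw [Real.exp_lt_one_iff]
      have := hδpos j
      nlinarith
    have hρ0 : (0 : ℝ) ≤ Real.exp (-(1 / ((j : ℝ) + 1)) ^ 2 / 4) := Real.exp_nonneg _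
    have hsum : ∑' n : ℕ, annealed P Pr 0 (B n)
        ≤ ∑' n : ℕ, (ENNReal.ofReal (Real.exp (-(1 / ((j : ℝ) + 1)) ^ 2 / 4))) ^ n := by
      refine ENNReal.tsum_le_tsum fun n => ?_
      rw [← ENNReal.ofReal_pow hρ0]
      exact hB n
    have hgeo : ∑' n : ℕ, (ENNReal.ofReal (Real.exp (-(1 / ((j : ℝ) + 1)) ^ 2 / 4))) ^ n
        = (1 - ENNReal.ofReal (Real.exp (-(1 / ((j : ℝ) + 1)) ^ 2 / 4)))⁻¹ :=
      ENNReal.tsum_geometric _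
    have hne : (1 - ENNReal.ofReal (Real.exp (-(1 / ((j : ℝ) + 1)) ^ 2 / 4)))⁻¹ ≠ ⊤ := by
      rw [ENNReal.inv_ne_top]
      intro hzero
      rw [tsub_eq_zero_iff_le] at hzero
      have : ENNReal.ofReal (Real.exp (-(1 / ((j : ℝ) + 1)) ^ 2 / 4)) < 1 := by
        rw [← ENNReal.ofReal_one]
        exact ENNReal.ofReal_lt_ofReal_iff_of_nonneg hρ0 |>.mpr hρ
      exact absurd hzero (not_le.mpr this)
    exact ne_top_of_le_ne_top (hgeo ▸ hne) hsum
  have hBpbound : ∀ j n, annealed P Pr 0 (Bp j n)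
      ≤ ENNReal.ofReal (Real.exp (-(1 / ((j : ℝ) + 1)) ^ 2 / 4) ^ n) := by
    intro j n
    set δ : ℝ := 1 / ((j : ℝ) + 1) with hδ
    have habs : |δ / 2| ≤ 1 := by
      rw [abs_of_nonneg (by positivity)]
      linarith [hδle j]
    refine le_trans (dev_bound hP hprob hgood hε0 hε5 (δ / 2) habs n
      ((δ / 2) * ((m + δ) * n))) ?_
    refine le_of_eq ?_
    congr 1
    rw [← Real.exp_add, ← Real.exp_nat_mul]
    congr 1
    ring
  have hBmbound : ∀ j n, annealed P Pr 0 (Bm j n)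
      ≤ ENNReal.ofReal (Real.exp (-(1 / ((j : ℝ) + 1)) ^ 2 / 4) ^ n) := by
    intro j n
    set δ : ℝ := 1 / ((j : ℝ) + 1) with hδ
    have habs : |-(δ / 2)| ≤ 1 := by
      rw [abs_neg, abs_of_nonneg (by positivity)]
      linarith [hδle j]
    refine le_trans (dev_bound hP hprob hgood hε0 hε5 (-(δ / 2)) habs n
      (-(δ / 2) * ((m - δ) * n))) ?_
    refine le_of_eq ?_
    congr 1
    rw [← Real.exp_add, ← Real.exp_nat_mul]
    congr 1
    ring
  have haep : ∀ᵐ X ∂(annealed P Pr 0), ∀ j : ℕ,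
      (∀ᶠ n in atTop, X ∉ Bp j n) ∧ (∀ᶠ n in atTop, X ∉ Bm j n) := by
    rw [ae_all_iff]
    intro j
    filter_upwards [key j (Bp j) (hBpbound j), key j (Bm j) (hBmbound j)] with X h1 h2
    exact ⟨h1, h2⟩
  filter_upwards [haep] with X hX
  rw [Metric.tendsto_atTop]
  intro eta heta
  obtain ⟨j, hj⟩ := exists_nat_one_div_lt heta
  obtain ⟨N1, hN1⟩ := (Filter.eventually_atTop).1 (hX j).1
  obtain ⟨N2, hN2⟩ := (Filter.eventually_atTop).1 (hX j).2
  refine ⟨max (max N1 N2) 1, fun n hn => ?_⟩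
  have hn1 : N1 ≤ n := le_trans (le_trans (le_max_left _ _) (le_max_left _ _)) hn
  have hn2 : N2 ≤ n := le_trans (le_trans (le_max_right _ _) (le_max_left _ _)) hn
  have hnpos : (1 : ℕ) ≤ n := le_trans (le_max_right _ _) hn
  have hnR : (0 : ℝ) < n := by exact_mod_cast hnpos
  have hp := hN1 n hn1
  have hm' := hN2 n hn2
  rw [hBp] at hp
  rw [hBm] at hm'
  rw [Set.mem_setOf_eq, not_le] at hp hm'
  have hpos2 : (0 : ℝ) ≤ 1 / ((j : ℝ) + 1) / 2 := by positivity
  have hup : dot (fun _ => (1 : ℝ)) (X n) < (m + 1 / ((j : ℝ) + 1)) * n :=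
    lt_of_mul_lt_mul_left hp hpos2
  have hmm : 1 / ((j : ℝ) + 1) / 2 * ((m - 1 / ((j : ℝ) + 1)) * n)
      < 1 / ((j : ℝ) + 1) / 2 * dot (fun _ => (1 : ℝ)) (X n) := by linarith
  have hlo : (m - 1 / ((j : ℝ) + 1)) * n < dot (fun _ => (1 : ℝ)) (X n) :=
    lt_of_mul_lt_mul_left hmm hpos2
  have h1 : dot (fun _ => (1 : ℝ)) (X n) / n < m + 1 / ((j : ℝ) + 1) := by
    rw [div_lt_iff₀ hnR]
    linarith
  have h2 : m - 1 / ((j : ℝ) + 1) < dot (fun _ => (1 : ℝ)) (X n) / n := by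
    rw [lt_div_iff₀ hnR]
    linarith
  rw [Real.dist_eq, abs_lt]
  constructor
  · linarith
  · linarith

lemma conc3 (hd : 2 ≤ d) (hP : IsQuenched P) (hprob : IsProbabilityMeasure Pr)
    (hε0 : 0 < ε) (hε5 : ε < 1 / 5)
    (h2 : ∀ᵐ X ∂(annealed P Pr 0),
      Tendsto (fun n : ℕ => dot (fun _ => (1 : ℝ)) (X n) / n) atTop (𝓝 (1 - 2 * ε))) :
    Transient P Pr (fun _ => (Real.sqrt d)⁻¹) := by
  have hdpos : (0 : ℝ) < d := by
    have : (2 : ℝ) ≤ d := by exact_mod_cast hd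
    linarith
  have hc : (0 : ℝ) < (Real.sqrt d)⁻¹ := inv_pos.2 (Real.sqrt_pos.2 hdpos)
  set ℓc : Fin d → ℝ := fun _ => (Real.sqrt d)⁻¹ with hℓc
  set T := {X : Traj d | Tendsto (fun n => dot ℓc (X n)) atTop atTop} with hT
  have hTmeas : MeasurableSet T := by
    have hTeq : T = ⋂ M : ℕ, ⋃ N : ℕ, ⋂ n ∈ Set.Ici N,
        {X : Traj d | (M : ℝ) ≤ dot ℓc (X n)} := by
      ext X
      simp only [hT, Set.mem_setOf_eq, Set.mem_iInter, Set.mem_iUnion, Set.mem_Ici]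
      constructor
      · intro hX M
        obtain ⟨N, hN⟩ := tendsto_atTop_atTop.1 hX (M : ℝ)
        exact ⟨N, fun n hn => hN n hn⟩
      · intro hX
        rw [tendsto_atTop_atTop]
        intro b
        obtain ⟨M, hM⟩ := exists_nat_ge b
        obtain ⟨N, hN⟩ := hX M
        exact ⟨N, fun n hn => le_trans hM (hN n hn)⟩
    rw [hTeq]
    refine MeasurableSet.iInter fun M => MeasurableSet.iUnion fun N =>
      MeasurableSet.biInter (Set.to_countable _) fun n _ => ?_
    exact measurableSet_traj n {y : V d | (M : ℝ) ≤ dot ℓc y}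
  have hae : ∀ᵐ X ∂(annealed P Pr 0), X ∈ T := by
    filter_upwards [h2] with X hX
    have hdot : ∀ y : V d, dot ℓc y = (Real.sqrt d)⁻¹ * dot (fun _ => (1 : ℝ)) y := by
      intro y
      rw [hℓc, dot, dot, Finset.mul_sum]
      exact Finset.sum_congr rfl fun i _ => by ring
    have hm : (0 : ℝ) < 1 - 2 * ε := by linarith
    have hev : ∀ᶠ n : ℕ in atTop, (1 - 2 * ε) / 2 * n ≤ dot (fun _ => (1 : ℝ)) (X n) := by
      have hev1 : ∀ᶠ n : ℕ in atTop,
          (1 - 2 * ε) / 2 < dot (fun _ => (1 : ℝ)) (X n) / n :=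
        hX.eventually (eventually_gt_nhds (by linarith))
      filter_upwards [hev1, eventually_ge_atTop 1] with n h1 hn
      have hnR : (0 : ℝ) < n := by exact_mod_cast hn
      rw [lt_div_iff₀ hnR] at h1
      linarith
    have hY : Tendsto (fun n : ℕ => dot (fun _ => (1 : ℝ)) (X n)) atTop atTop := by
      refine tendsto_atTop_mono' atTop hev ?_
      exact Tendsto.const_mul_atTop (by linarith) tendsto_natCast_atTop_atTop
    show Tendsto (fun n => dot ℓc (X n)) atTop atTop
    have : (fun n : ℕ => dot ℓc (X n))
        = fun n : ℕ => (Real.sqrt d)⁻¹ * dot (fun _ => (1 : ℝ)) (X n) := by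
      funext n
      exact hdot (X n)
    rw [this]
    exact Tendsto.const_mul_atTop hc hY
  haveI := annealed_prob hP hprob
  rw [Transient]
  refine (prob_compl_eq_zero_iff hTmeas).1 ?_
  rw [ae_iff] at hae
  exact hae

end Main
section CondTproof

variable {d : ℕ} {P : Env d → V d → Measure (Traj d)} {Pr : Measure (Env d)} {ε : ℝ}

lemma lower_path (hP : IsQuenched P) (hd : 2 ≤ d) (hε0 : 0 < ε)
    (ω : Env d) (hg : ∀ x : V d, ∑ i : Fin d, pmf ω x (i, true) = 1 - ε)
    (ℓ' : Fin d → ℝ) (c : ℝ) (hc0 : 0 < c)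
    (hllo : ∀ i, c / 2 ≤ ℓ' i) (L : ℝ) (hL : 1 ≤ L) (N : ℕ)
    (hN : L < N * (c / 2)) :
    ENNReal.ofReal ((ε / d) ^ N) ≤ P ω 0
      {X : Traj d | ∃ n, X n ∉ slab ℓ' 1 L ∧ (∀ m < n, X m ∈ slab ℓ' 1 L) ∧
        dot ℓ' (X n) < 0} := by
  classical
  haveI := hP.1 ω 0
  have hdpos : (0 : ℝ) < d := by
    have : (2 : ℝ) ≤ (d : ℝ) := by exact_mod_cast hd
    linarith
  haveI : Nonempty (Fin d) := ⟨⟨0, by omega⟩⟩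
  -- at every site there is a negative direction with decent probability
  have hpick : ∀ y : V d, ∃ e : Dir d, e.2 = false ∧ ε / d ≤ pmf ω y e := by
    intro y
    have hneg := sum_pmf_neg ω y (hg y)
    have hconst : ∑ _i : Fin d, ε / (d : ℝ) = ε := by
      rw [Finset.sum_const, Finset.card_univ, Fintype.card_fin, nsmul_eq_mul]
      field_simp
    have hle : ∑ i : Fin d, ε / (d : ℝ) ≤ ∑ i : Fin d, pmf ω y (i, false) := by
      rw [hconst, hneg]
    obtain ⟨i, _, hi⟩ := Finset.exists_le_of_sum_le Finset.univ_nonempty hle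
    exact ⟨(i, false), rfl, hi⟩
  set pick : V d → Dir d := fun y => (hpick y).choose with hpickdef
  have hspec : ∀ y, (pick y).2 = false ∧ ε / d ≤ pmf ω y (pick y) :=
    fun y => (hpick y).choose_spec
  -- the greedy downward path
  set DP : ℕ → V d :=
    fun k => Nat.rec (motive := fun _ => V d) (0 : V d)
      (fun _ y => y + dirVec d (pick y)) k with hDP
  have hDP0 : DP 0 = 0 := rfl
  have hDPs : ∀ k, DP (k + 1) = DP k + dirVec d (pick (DP k)) := fun k => rfl
  set esN : Fin N → Dir d := fun k => pick (DP (k : ℕ)) with hesN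
  have hpos : ∀ k, k ≤ N → posAt (0 : V d) esN k = DP k := by
    intro k
    induction k with
    | zero => intro _; rw [posAt_zero, hDP0]
    | succ k ih =>
      intro hk
      have hklt : k < N := Nat.lt_of_succ_le hk
      rw [posAt_step (0 : V d) esN k hklt, ih (le_of_lt hklt), hDPs k]
  -- dot decreases linearly
  have hdots : ∀ k : ℕ, dot ℓ' (DP k) ≤ -(k * (c / 2)) := by
    intro k
    induction k with
    | zero => rw [hDP0, dot_zero]; norm_num
    | succ k ih =>
      rw [hDPs k, dot_add, dot_dirVec, (hspec (DP k)).1, if_neg (by norm_num)]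
      have hlo := hllo (pick (DP k)).1
      push_cast
      linarith
  -- the path probability
  have hppb : (ε / d) ^ N ≤ pathProb ω 0 esN := by
    rw [pathProb]
    calc (ε / (d : ℝ)) ^ N = ∏ _k : Fin N, (ε / (d : ℝ)) := by
          rw [Finset.prod_const, Finset.card_univ, Fintype.card_fin]
      _ ≤ ∏ k : Fin N, pmf ω (posAt 0 esN (k : ℕ)) (esN k) := by
          refine Finset.prod_le_prod (fun k _ => by positivity) fun k _ => ?_
          rw [hpos (k : ℕ) (le_of_lt k.isLt)]
          exact (hspec (DP (k : ℕ))).2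
  -- the cylinder is contained in the event
  have hQex : ∃ k : ℕ, dot ℓ' (DP k) < -L := by
    refine ⟨N, lt_of_le_of_lt (hdots N) ?_⟩
    linarith
  have hsub : cyl (0 : V d) esN ⊆
      {X : Traj d | ∃ n, X n ∉ slab ℓ' 1 L ∧ (∀ m < n, X m ∈ slab ℓ' 1 L) ∧
        dot ℓ' (X n) < 0} := by
    intro X hX
    set n0 := Nat.find hQex with hn0
    have hQn0 : dot ℓ' (DP n0) < -L := Nat.find_spec hQex
    have hmin : ∀ m, m < n0 → ¬ dot ℓ' (DP m) < -L := fun m hm => Nat.find_min hQex hm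
    have hn0N : n0 ≤ N := Nat.find_le (lt_of_le_of_lt (hdots N) (by linarith))
    refine ⟨n0, ?_, ?_, ?_⟩
    · rw [hX n0 hn0N, hpos n0 hn0N]
      rintro ⟨h1, _⟩
      rw [one_mul] at h1
      linarith
    · intro m hm
      rw [hX m (le_trans (le_of_lt hm) hn0N), hpos m (le_trans (le_of_lt hm) hn0N)]
      refine ⟨?_, ?_⟩
      · rw [one_mul]
        exact not_lt.mp (hmin m hm)
      · have := hdots m
        have hm0 : (0 : ℝ) ≤ m * (c / 2) := by positivity
        linarith
    · rw [hX n0 hn0N, hpos n0 hn0N]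
      linarith
  calc ENNReal.ofReal ((ε / d) ^ N) ≤ ENNReal.ofReal (pathProb ω 0 esN) :=
        ENNReal.ofReal_le_ofReal hppb
    _ = P ω 0 (cyl (0 : V d) esN) := (quenched_cyl_eq hP ω 0 esN).symm
    _ ≤ _ := measure_mono hsub

lemma rho_bound {c : ℝ} (hε0 : 0 < ε) (hε5 : ε < 1 / 5) (hc0 : 0 < c) (hc1 : c ≤ 1) :
    (1 - ε) * Real.exp (-((1 : ℝ) / 100) * (c / 2))
      + ε * Real.exp ((1 / 100) * (3 * c / 2)) ≤ 1 - c / 2000 := by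
  have h1 := exp_le_quad (x := -((1 : ℝ) / 100) * (c / 2))
    (by rw [abs_of_nonpos (by nlinarith)]; nlinarith)
  have h2 := exp_le_quad (x := ((1 : ℝ) / 100) * (3 * c / 2))
    (by rw [abs_of_nonneg (by nlinarith)]; nlinarith)
  nlinarith [mul_le_mul_of_nonneg_left h1 (by linarith : (0 : ℝ) ≤ 1 - ε),
    mul_le_mul_of_nonneg_left h2 hε0.le, sq_nonneg c, mul_pos hε0 hc0,
    mul_le_mul_of_nonneg_right hε5.le (mul_pos hc0 hc0).le,
    mul_le_mul_of_nonneg_right hε5.le hc0.le, mul_le_mul_of_nonneg_left hc1 hc0.le]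

end CondTproof
set_option maxHeartbeats 1000000

section Conc4

variable {d : ℕ} {P : Env d → V d → Measure (Traj d)} {Pr : Measure (Env d)} {ε : ℝ}

lemma conc4 (hd : 2 ≤ d) (hP : IsQuenched P) (hprob : IsProbabilityMeasure Pr)
    (hgood : ∀ᵐ ω ∂Pr, ∀ x : V d, ∑ i : Fin d, pmf ω x (i, true) = 1 - ε)
    (hε0 : 0 < ε) (hε5 : ε < 1 / 5) :
    CondT P Pr (fun _ => (Real.sqrt d)⁻¹) := by
  classical
  haveI := annealed_prob hP hprob
  have hd2 : (2 : ℝ) ≤ (d : ℝ) := by exact_mod_cast hd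
  have hdpos : (0 : ℝ) < d := by linarith
  have hc0 : (0 : ℝ) < (Real.sqrt d)⁻¹ := inv_pos.2 (Real.sqrt_pos.2 hdpos)
  have hc1 : (Real.sqrt d)⁻¹ ≤ 1 := by
    have h1 : (1 : ℝ) ≤ Real.sqrt d := by
      nlinarith [Real.sq_sqrt (by linarith : (0 : ℝ) ≤ (d : ℝ)), Real.sqrt_nonneg (d : ℝ)]
    exact inv_le_one_of_one_le₀ h1
  set c : ℝ := (Real.sqrt d)⁻¹ with hcdef
  refine ⟨c ^ 2 / 4, by positivity, 1, one_pos, fun ℓ' _ hnear => ?_⟩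
  -- coordinate bounds
  have hterm : ∀ i, (ℓ' i - c) ^ 2 < c ^ 2 / 4 := by
    intro i
    refine lt_of_le_of_lt ?_ hnear
    exact Finset.single_le_sum (f := fun i => (ℓ' i - c) ^ 2)
      (fun i _ => sq_nonneg _) (Finset.mem_univ i)
  have hlo : ∀ i, c / 2 ≤ ℓ' i := by
    intro i
    by_contra hcon
    push_neg at hcon
    have hprod : (0 : ℝ) < (c / 2 - ℓ' i) * (3 * c / 2 - ℓ' i) :=
      mul_pos (by linarith) (by linarith)
    nlinarith [hterm i]
  have hhi : ∀ i, ℓ' i ≤ 3 * c / 2 := by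
    intro i
    by_contra hcon
    push_neg at hcon
    have hprod : (0 : ℝ) < (ℓ' i - 3 * c / 2) * (ℓ' i - c / 2) :=
      mul_pos (by linarith) (by linarith)
    nlinarith [hterm i]
  -- constants
  set Wp : ℝ := Real.exp (-((1 : ℝ) / 100) * (c / 2)) with hWp
  set Wn : ℝ := Real.exp ((1 / 100 : ℝ) * (3 * c / 2)) with hWn
  set K0 : ℝ := (1 - ε) * Wp + ε * Wn with hK0
  have hK0pos : 0 ≤ K0 :=
    add_nonneg (mul_nonneg (by linarith) (Real.exp_nonneg _))
      (mul_nonneg hε0.le (Real.exp_nonneg _))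
  have hK0rho : K0 ≤ 1 - c / 2000 := rho_bound hε0 hε5 hc0 hc1
  have hrho0 : (0 : ℝ) ≤ 1 - c / 2000 := by linarith
  have hrho1 : 1 - c / 2000 < 1 := by linarith
  -- quenched Chernoff for each n
  have hquench : ∀ (L : ℝ) (n : ℕ), ∀ᵐ ω ∂Pr,
      (P ω 0 {X : Traj d | (1 / 100 : ℝ) * L ≤ (-(1 / 100 : ℝ)) * dot ℓ' (X n)}).toReal
        ≤ Real.exp (-((1 / 100 : ℝ) * L)) * (1 - c / 2000) ^ n := by
    intro L n
    filter_upwards [hgood] with ω hg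
    have hsite : ∀ y : V d,
        ∑ e : Dir d, pmf ω y e * Real.exp ((-(1 / 100 : ℝ)) * dot ℓ' (dirVec d e)) ≤ K0 := by
      intro y
      refine site_weight ω y (hg y) _ Wp Wn ?_ ?_
      · intro i
        show Real.exp ((-(1 / 100 : ℝ)) * dot ℓ' (dirVec d (i, true))) ≤ Wp
        rw [dot_dirVec, if_pos (show ((i, true) : Dir d).2 = true from rfl), hWp]
        refine Real.exp_le_exp.mpr ?_
        nlinarith [hlo i]
      · intro i
        show Real.exp ((-(1 / 100 : ℝ)) * dot ℓ' (dirVec d (i, false))) ≤ Wn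
        rw [dot_dirVec, if_neg (show ¬(((i, false) : Dir d).2 = true) by simp), hWn]
        refine Real.exp_le_exp.mpr ?_
        nlinarith [hhi i]
    refine le_trans (chernoff_quenched hP ω ℓ' (-(1 / 100 : ℝ)) ((1 / 100 : ℝ) * L) n
      K0 hK0pos hsite) ?_
    exact mul_le_mul_of_nonneg_left (pow_le_pow_left₀ hK0pos hK0rho n) (Real.exp_nonneg _)
  -- measurable events
  have hGmeas : ∀ (L : ℝ) (n : ℕ), MeasurableSet
      {X : Traj d | (1 / 100 : ℝ) * L ≤ (-(1 / 100 : ℝ)) * dot ℓ' (X n)} :=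
    fun L n => measurableSet_traj n {y : V d | (1 / 100 : ℝ) * L ≤ (-(1 / 100 : ℝ)) * dot ℓ' y}
  have hEmeas : ∀ L : ℝ, MeasurableSet {X : Traj d | ∃ n, X n ∉ slab ℓ' 1 L ∧
      (∀ m < n, X m ∈ slab ℓ' 1 L) ∧ dot ℓ' (X n) < 0} := by
    intro L
    have heq : {X : Traj d | ∃ n, X n ∉ slab ℓ' 1 L ∧
        (∀ m < n, X m ∈ slab ℓ' 1 L) ∧ dot ℓ' (X n) < 0}
        = ⋃ n : ℕ, ({X : Traj d | X n ∈ {y : V d | y ∉ slab ℓ' 1 L ∧ dot ℓ' y < 0}}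
          ∩ ⋂ m ∈ Set.Iio n, {X : Traj d | X m ∈ slab ℓ' 1 L}) := by
      ext X
      simp only [Set.mem_setOf_eq, Set.mem_iUnion, Set.mem_inter_iff, Set.mem_iInter,
        Set.mem_Iio]
      constructor
      · rintro ⟨n, h1, h2, h3⟩
        exact ⟨n, ⟨h1, h3⟩, h2⟩
      · rintro ⟨n, ⟨h1, h3⟩, h2⟩
        exact ⟨n, h1, h2, h3⟩
    rw [heq]
    exact MeasurableSet.iUnion fun n => (measurableSet_traj n _).inter
      (MeasurableSet.biInter (Set.to_countable _) fun m _ => measurableSet_traj m _)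
  -- annealed upper bound
  have hub : ∀ L : ℝ, 0 ≤ L →
      annealed P Pr 0 {X : Traj d | ∃ n, X n ∉ slab ℓ' 1 L ∧
        (∀ m < n, X m ∈ slab ℓ' 1 L) ∧ dot ℓ' (X n) < 0}
      ≤ ENNReal.ofReal (Real.exp (-((1 / 100 : ℝ) * L)) * (c / 2000)⁻¹) := by
    intro L hL
    have hsub : {X : Traj d | ∃ n, X n ∉ slab ℓ' 1 L ∧
        (∀ m < n, X m ∈ slab ℓ' 1 L) ∧ dot ℓ' (X n) < 0}
        ⊆ ⋃ n : ℕ, {X : Traj d | (1 / 100 : ℝ) * L ≤ (-(1 / 100 : ℝ)) * dot ℓ' (X n)} := by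
      rintro X ⟨n, h1, _, h3⟩
      refine Set.mem_iUnion.2 ⟨n, ?_⟩
      have hd1 : dot ℓ' (X n) < -L := by
        by_contra hge
        push_neg at hge
        apply h1
        refine ⟨?_, ?_⟩
        · rw [one_mul]; exact hge
        · linarith
      show (1 / 100 : ℝ) * L ≤ (-(1 / 100 : ℝ)) * dot ℓ' (X n)
      nlinarith
    calc annealed P Pr 0 {X : Traj d | ∃ n, X n ∉ slab ℓ' 1 L ∧
          (∀ m < n, X m ∈ slab ℓ' 1 L) ∧ dot ℓ' (X n) < 0}
        ≤ annealed P Pr 0 (⋃ n : ℕ,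
            {X : Traj d | (1 / 100 : ℝ) * L ≤ (-(1 / 100 : ℝ)) * dot ℓ' (X n)}) :=
          measure_mono hsub
      _ ≤ ∑' n : ℕ, annealed P Pr 0
            {X : Traj d | (1 / 100 : ℝ) * L ≤ (-(1 / 100 : ℝ)) * dot ℓ' (X n)} :=
          measure_iUnion_le _
      _ ≤ ∑' n : ℕ, ENNReal.ofReal (Real.exp (-((1 / 100 : ℝ) * L))) *
            (ENNReal.ofReal (1 - c / 2000)) ^ n := by
          refine ENNReal.tsum_le_tsum fun n => ?_
          have h1 := annealed_le hP hprob _ (hGmeas L n) _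
            (mul_nonneg (Real.exp_nonneg _) (pow_nonneg hrho0 n)) (hquench L n)
          refine le_trans h1 ?_
          rw [ENNReal.ofReal_mul (Real.exp_nonneg _), ENNReal.ofReal_pow hrho0]
      _ = ENNReal.ofReal (Real.exp (-((1 / 100 : ℝ) * L))) *
            (1 - ENNReal.ofReal (1 - c / 2000))⁻¹ := by
          rw [ENNReal.tsum_mul_left, ENNReal.tsum_geometric]
      _ = ENNReal.ofReal (Real.exp (-((1 / 100 : ℝ) * L)) * (c / 2000)⁻¹) := by
          have hsub2 : (1 : ℝ≥0∞) - ENNReal.ofReal (1 - c / 2000)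
              = ENNReal.ofReal (c / 2000) := by
            rw [← ENNReal.ofReal_one, ← ENNReal.ofReal_sub _ hrho0]
            norm_num
          rw [hsub2, ← ENNReal.ofReal_inv_of_pos (by positivity),
            ← ENNReal.ofReal_mul (Real.exp_nonneg _)]
  -- annealed lower bound
  have hlb : ∀ L : ℝ, 1 ≤ L →
      ENNReal.ofReal ((ε / d) ^ (⌈2 * L / c⌉₊ + 1)) ≤
      annealed P Pr 0 {X : Traj d | ∃ n, X n ∉ slab ℓ' 1 L ∧
        (∀ m < n, X m ∈ slab ℓ' 1 L) ∧ dot ℓ' (X n) < 0} := by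
    intro L hL
    refine annealed_ge hP hprob _ (hEmeas L) _ ?_
    filter_upwards [hgood] with ω hg
    refine lower_path hP hd hε0 ω hg ℓ' c hc0 hlo L hL (⌈2 * L / c⌉₊ + 1) ?_
    have hceil : 2 * L / c ≤ (⌈2 * L / c⌉₊ : ℝ) := Nat.le_ceil _
    have hfield : 2 * L / c * (c / 2) = L := by field_simp
    push_cast
    nlinarith [mul_le_mul_of_nonneg_right hceil (by positivity : (0 : ℝ) ≤ c / 2)]
  -- the limsup estimate
  refine lt_of_le_of_lt (Filter.limsup_le_of_le ?_ ?_) (by norm_num : -(1 / 200 : ℝ) < 0)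
  · -- coboundedness: eventual lower bound
    refine isCoboundedUnder_le_of_eventually_le atTop
      (x := (2 / c + 2) * Real.log (ε / d)) ?_
    filter_upwards [eventually_ge_atTop (1 : ℝ)] with L hL
    have hLpos : (0 : ℝ) < L := by linarith
    have hklog : Real.log (ε / d) < 0 :=
      Real.log_neg (by positivity) (by rw [div_lt_one hdpos]; linarith)
    set N : ℕ := ⌈2 * L / c⌉₊ + 1 with hN
    have hA0 : (ε / d) ^ N ≤ (annealed P Pr 0 {X : Traj d | ∃ n, X n ∉ slab ℓ' 1 L ∧
        (∀ m < n, X m ∈ slab ℓ' 1 L) ∧ dot ℓ' (X n) < 0}).toReal := by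
      have h1 := hlb L hL
      have h2 := ENNReal.toReal_mono (measure_ne_top _ _) h1
      rwa [ENNReal.toReal_ofReal (by positivity)] at h2
    have hApos : (0 : ℝ) < (annealed P Pr 0 {X : Traj d | ∃ n, X n ∉ slab ℓ' 1 L ∧
        (∀ m < n, X m ∈ slab ℓ' 1 L) ∧ dot ℓ' (X n) < 0}).toReal :=
      lt_of_lt_of_le (by positivity) hA0
    have hlogA : (N : ℝ) * Real.log (ε / d) ≤ Real.log ((annealed P Pr 0
        {X : Traj d | ∃ n, X n ∉ slab ℓ' 1 L ∧
        (∀ m < n, X m ∈ slab ℓ' 1 L) ∧ dot ℓ' (X n) < 0}).toReal) := by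
      rw [← Real.log_pow]
      exact Real.log_le_log (by positivity) hA0
    have hNle : (N : ℝ) ≤ L * (2 / c + 2) := by
      have hceil : (⌈2 * L / c⌉₊ : ℝ) < 2 * L / c + 1 := Nat.ceil_lt_add_one (by positivity)
      have hNcast : (N : ℝ) = (⌈2 * L / c⌉₊ : ℝ) + 1 := by
        rw [hN]; push_cast; ring
      rw [hNcast]
      calc (⌈2 * L / c⌉₊ : ℝ) + 1 ≤ (2 * L / c + 1) + 1 := by linarith
        _ = L * (2 / c) + 2 := by ring
        _ ≤ L * (2 / c) + 2 * L := by linarith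
        _ = L * (2 / c + 2) := by ring
    have step1 : L * (2 / c + 2) * Real.log (ε / d) ≤ (N : ℝ) * Real.log (ε / d) :=
      mul_le_mul_of_nonpos_right hNle hklog.le
    have step2 : L⁻¹ * (L * (2 / c + 2) * Real.log (ε / d))
        ≤ L⁻¹ * Real.log ((annealed P Pr 0 {X : Traj d | ∃ n, X n ∉ slab ℓ' 1 L ∧
          (∀ m < n, X m ∈ slab ℓ' 1 L) ∧ dot ℓ' (X n) < 0}).toReal) :=
      mul_le_mul_of_nonneg_left (le_trans step1 hlogA) (by positivity)
    refine le_trans (le_of_eq ?_) step2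
    have hinv : L⁻¹ * L = 1 := inv_mul_cancel₀ (ne_of_gt hLpos)
    calc (2 / c + 2) * Real.log (ε / d)
        = (L⁻¹ * L) * ((2 / c + 2) * Real.log (ε / d)) := by rw [hinv]; ring
      _ = L⁻¹ * (L * (2 / c + 2) * Real.log (ε / d)) := by ring
  · -- eventual upper bound
    set logC : ℝ := Real.log ((c / 2000)⁻¹) with hlogC
    filter_upwards [eventually_ge_atTop (max 1 (200 * |logC|))] with L hL
    have hL1 : (1 : ℝ) ≤ L := le_trans (le_max_left _ _) hL
    have hLpos : (0 : ℝ) < L := by linarith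
    have hLC : 200 * |logC| ≤ L := le_trans (le_max_right _ _) hL
    set N : ℕ := ⌈2 * L / c⌉₊ + 1 with hN
    have hApos : (0 : ℝ) < (annealed P Pr 0 {X : Traj d | ∃ n, X n ∉ slab ℓ' 1 L ∧
        (∀ m < n, X m ∈ slab ℓ' 1 L) ∧ dot ℓ' (X n) < 0}).toReal := by
      have h1 := hlb L hL1
      have h2 := ENNReal.toReal_mono (measure_ne_top _ _) h1
      rw [ENNReal.toReal_ofReal (by positivity)] at h2
      exact lt_of_lt_of_le (by positivity) h2
    have hAle : (annealed P Pr 0 {X : Traj d | ∃ n, X n ∉ slab ℓ' 1 L ∧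
        (∀ m < n, X m ∈ slab ℓ' 1 L) ∧ dot ℓ' (X n) < 0}).toReal
        ≤ Real.exp (-((1 / 100 : ℝ) * L)) * (c / 2000)⁻¹ :=
      ENNReal.toReal_le_of_le_ofReal
        (mul_nonneg (Real.exp_nonneg _) (by positivity)) (hub L (by linarith))
    have hlog : Real.log ((annealed P Pr 0 {X : Traj d | ∃ n, X n ∉ slab ℓ' 1 L ∧
        (∀ m < n, X m ∈ slab ℓ' 1 L) ∧ dot ℓ' (X n) < 0}).toReal)
        ≤ -((1 / 100 : ℝ) * L) + logC := by
      refine le_trans (Real.log_le_log hApos hAle) ?_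
      rw [Real.log_mul (Real.exp_ne_zero _) (by positivity), Real.log_exp, hlogC]
    have hmul : L⁻¹ * Real.log ((annealed P Pr 0 {X : Traj d | ∃ n, X n ∉ slab ℓ' 1 L ∧
        (∀ m < n, X m ∈ slab ℓ' 1 L) ∧ dot ℓ' (X n) < 0}).toReal)
        ≤ L⁻¹ * (-((1 / 100 : ℝ) * L) + logC) :=
      mul_le_mul_of_nonneg_left hlog (by positivity)
    refine le_trans hmul ?_
    have heq : L⁻¹ * (-((1 / 100 : ℝ) * L) + logC) = -(1 / 100 : ℝ) + L⁻¹ * logC := by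
      have hinv : L⁻¹ * L = 1 := inv_mul_cancel₀ (ne_of_gt hLpos)
      calc L⁻¹ * (-((1 / 100 : ℝ) * L) + logC)
          = -(1 / 100 : ℝ) * (L⁻¹ * L) + L⁻¹ * logC := by ring
        _ = -(1 / 100 : ℝ) + L⁻¹ * logC := by rw [hinv]; ring
    rw [heq]
    have hbound : L⁻¹ * logC ≤ 1 / 200 := by
      have h1 : L⁻¹ * logC ≤ L⁻¹ * |logC| :=
        mul_le_mul_of_nonneg_left (le_abs_self _) (by positivity)
      have h2 : L⁻¹ * |logC| ≤ 1 / 200 := by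
        rw [inv_mul_le_iff₀ hLpos]
        linarith
      linarith
    linarith

end Conc4
/-- For the random walk in the environment `𝐏^expl` with
`ε ∈ (1/(2d+1), 1/5)`: a.s. `P^ω_0[X₁·ℓ₀ = 1] = 1 - ε` where `ℓ₀ = e₁ + ⋯ + e_d`;
consequently `X_n·ℓ₀/n → 1-2ε` a.s., the walk is transient in the direction `ℓ₀/|ℓ₀|`, and
condition `(T)` holds in that direction. -/
theorem pexpl_transient_and_condT
    (d : ℕ) (hd : 2 ≤ d)
    (P : Env d → V d → Measure (Traj d)) (hP : IsQuenched P)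
    (Pr : Measure (Env d)) (ε : ℝ) (hPr : IsPexpl Pr ε)
    (hε : 1 / (2 * (d : ℝ) + 1) < ε ∧ ε < 1 / 5) :
    (∀ᵐ ω ∂Pr, ((P ω 0) {X | dot (fun _ => (1 : ℝ)) (X 1) = 1}).toReal = 1 - ε) ∧
    (∀ᵐ X ∂(annealed P Pr 0),
      Tendsto (fun n : ℕ => dot (fun _ => (1 : ℝ)) (X n) / n) atTop (𝓝 (1 - 2 * ε))) ∧
    Transient P Pr (fun _ => (Real.sqrt d)⁻¹) ∧
    CondT P Pr (fun _ => (Real.sqrt d)⁻¹) := by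
  have hprob : IsProbabilityMeasure Pr := hPr.1.1
  have hgood := ae_good hd hPr
  have hε0 : 0 < ε := by
    refine lt_trans ?_ hε.1
    have : (0 : ℝ) < 2 * (d : ℝ) + 1 := by positivity
    positivity
  have hε5 : ε < 1 / 5 := hε.2
  have hε1 : ε ≤ 1 := by linarith
  refine ⟨?_, ?_, ?_, ?_⟩
  · filter_upwards [hgood] with ω hg
    exact part1 hP ω hg hε1
  · exact conc2 hP hprob hgood hε0 hε5
  · exact conc3 hd hP hprob hε0 hε5 (conc2 hP hprob hgood hε0 hε5)
  · exact conc4 hd hP hprob hgood hε0 hε5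

end RWRE
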